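/- arXiv:1802.08605 — 2 statements merged into one kernel-verified Lean document; each statement's English description precedes it below -/
import Mathlib

section
/- For every natural number k ≥ 1 and every real λ ∈ (−1,1), the Chebyshev polynomial of the second kind admits the principal value integral representation U_{k-1}(λ) = (τ/π) ∫₀^{π/τ} cos(ωt)/(cos(ωτ) − λ) dω with t = kτ, the integral understood as a Cauchy principal value at the point where cos(ωτ) = λ. -/
open Polynomial Real Set Filter MeasureTheory Topology

/-- Cauchy principal value representation of Chebyshev `U`:
`U_{k−1}(λ) = (τ/π) PV ∫₀^{π/τ} cos(ωt)/(cos(ωτ) − λ) dω` with `t = kτ`,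
the principal value being taken at the point where `cos(ωτ) = λ`. -/
theorem chebyshev_U_principal_value_integral (τ : ℝ) (hτ : 0 < τ) (k : ℕ) (hk : 1 ≤ k)
    (l : ℝ) (hl : l ∈ Set.Ioo (-1 : ℝ) 1) :
    Filter.Tendsto
      (fun ε : ℝ =>
        (τ / Real.pi) *
          ∫ ω in Set.Ioo (0 : ℝ) (Real.pi / τ) \
              Set.Ioo (Real.arccos l / τ - ε) (Real.arccos l / τ + ε),
            Real.cos (ω * (k * τ)) / (Real.cos (ω * τ) - l))
      (nhdsWithin 0 (Set.Ioi 0))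
      (nhds ((Polynomial.Chebyshev.U ℝ ((k : ℤ) - 1)).eval l)) := by
  obtain ⟨hl1, hl2⟩ := hl
  have hπ : (0:ℝ) < Real.pi := Real.pi_pos
  set θ := Real.arccos l with hθdef
  have hθ0 : 0 < θ := Real.arccos_pos.2 hl2
  have hθπ : θ < Real.pi := lt_of_le_of_ne (Real.arccos_le_pi l)
    (fun h => absurd (Real.arccos_eq_pi.mp h) (by linarith))
  have hcosθ : Real.cos θ = l := Real.cos_arccos hl1.le hl2.le
  have hsinθ : 0 < Real.sin θ := Real.sin_pos_of_pos_of_lt_pi hθ0 hθπ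
  set a := θ / τ with hadef
  have ha0 : 0 < a := div_pos hθ0 hτ
  have haπ : a < Real.pi / τ := by rw [hadef]; gcongr
  have haτ : a * τ = θ := div_mul_cancel₀ θ hτ.ne'
  set S : ℝ → Set ℝ := fun ε => Ioo (0:ℝ) (Real.pi/τ) \ Ioo (a - ε) (a + ε) with hSdef
  set J : ℕ → ℝ → ℝ :=
    fun m ε => ∫ ω in S ε, Real.cos (ω * ((m:ℝ) * τ)) / (Real.cos (ω * τ) - l) with hJdef
  -- nonvanishing of the denominator away from `a`
  have hne : ∀ ω ∈ Icc (0:ℝ) (Real.pi/τ), ω ≠ a → Real.cos (ω*τ) - l ≠ 0 := by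
    intro ω hω hωa h
    have h1 : Real.cos (ω*τ) = Real.cos θ := by
      rw [hcosθ]; linarith [sub_eq_zero.mp h]
    have hωτ : ω * τ ∈ Icc (0:ℝ) Real.pi := by
      constructor
      · exact mul_nonneg hω.1 hτ.le
      · have h2 : ω ≤ Real.pi / τ := hω.2
        calc ω * τ ≤ (Real.pi / τ) * τ := by nlinarith
          _ = Real.pi := div_mul_cancel₀ _ hτ.ne'
    have := Real.injOn_cos hωτ ⟨hθ0.le, hθπ.le⟩ h1
    exact hωa (by rw [hadef, eq_div_iff hτ.ne']; exact this)
  -- integrability on S ε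
  have hSsub : ∀ ε : ℝ, S ε ⊆ Icc (0:ℝ) (Real.pi/τ) \ Ioo (a-ε) (a+ε) := by
    intro ε; exact diff_subset_diff_left Ioo_subset_Icc_self
  have hneS : ∀ ε : ℝ, 0 < ε → ∀ ω ∈ Icc (0:ℝ) (Real.pi/τ) \ Ioo (a-ε) (a+ε),
      Real.cos (ω*τ) - l ≠ 0 := by
    intro ε hε ω hω
    refine hne ω hω.1 ?_
    intro h
    exact hω.2 (by rw [h]; exact ⟨by linarith, by linarith⟩)
  have hIntAux : ∀ (c : ℝ) (ε : ℝ), 0 < ε →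
      IntegrableOn (fun ω => Real.cos (ω * c) / (Real.cos (ω*τ) - l)) (S ε) := by
    intro c ε hε
    refine MeasureTheory.IntegrableOn.mono_set ?_ (hSsub ε)
    refine ContinuousOn.integrableOn_compact (isCompact_Icc.diff isOpen_Ioo) ?_
    refine ContinuousOn.div ?_ ?_ ?_
    · exact (Real.continuous_cos.comp (continuous_id.mul continuous_const)).continuousOn
    · exact ((Real.continuous_cos.comp (continuous_id.mul continuous_const)).sub
        continuous_const).continuousOn
    · exact hneS ε hε
  -- the "small middle interval"
  have hTsub : ∀ ε : ℝ, Ioo (0:ℝ) (Real.pi/τ) ∩ Ioo (a-ε) (a+ε) ⊆ Ioo (0:ℝ) (Real.pi/τ) :=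
    fun ε => inter_subset_left
  have hTmeas : ∀ ε : ℝ, MeasurableSet (Ioo (0:ℝ) (Real.pi/τ) ∩ Ioo (a-ε) (a+ε)) :=
    fun ε => measurableSet_Ioo.inter measurableSet_Ioo
  have hTvol : ∀ ε : ℝ, 0 < ε →
      (volume (Ioo (0:ℝ) (Real.pi/τ) ∩ Ioo (a-ε) (a+ε))).toReal ≤ 2*ε := by
    intro ε hε
    have h1 : volume (Ioo (0:ℝ) (Real.pi/τ) ∩ Ioo (a-ε) (a+ε)) ≤ ENNReal.ofReal (2*ε) := by
      refine le_trans (measure_mono inter_subset_right) ?_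
      rw [Real.volume_Ioo]
      exact ENNReal.ofReal_le_ofReal (by ring_nf; linarith)
    calc (volume (Ioo (0:ℝ) (Real.pi/τ) ∩ Ioo (a-ε) (a+ε))).toReal
        ≤ (ENNReal.ofReal (2*ε)).toReal := ENNReal.toReal_mono ENNReal.ofReal_ne_top h1
      _ = 2*ε := ENNReal.toReal_ofReal (by linarith)
  have hSdiff : ∀ ε : ℝ, S ε = Ioo (0:ℝ) (Real.pi/τ) \ (Ioo (0:ℝ) (Real.pi/τ) ∩ Ioo (a-ε) (a+ε)) := by
    intro ε; rw [hSdef]; simp [Set.diff_self_inter]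
  have htwoeps : Tendsto (fun ε : ℝ => 2*ε) (𝓝[>] (0:ℝ)) (𝓝 0) := by
    have : Tendsto (fun ε : ℝ => 2*ε) (𝓝 (0:ℝ)) (𝓝 (2*0)) :=
      (continuous_const.mul continuous_id).tendsto 0
    simpa using this.mono_left nhdsWithin_le_nhds
  -- ∫ of cos(m τ ω) over the full interval is 0 for m ≥ 1
  have hIcos : ∀ m : ℕ, 1 ≤ m →
      (∫ ω in Ioo (0:ℝ) (Real.pi/τ), Real.cos (ω*((m:ℝ)*τ))) = 0 := by
    intro m hm
    have hm0 : (0:ℝ) < (m:ℝ) := by exact_mod_cast hm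
    have hmτ : (m:ℝ)*τ ≠ 0 := by positivity
    rw [← MeasureTheory.integral_Ioc_eq_integral_Ioo,
      ← intervalIntegral.integral_of_le (by positivity : (0:ℝ) ≤ Real.pi/τ)]
    rw [intervalIntegral.integral_comp_mul_right Real.cos hmτ]
    rw [integral_cos]
    have h1 : Real.pi/τ * ((m:ℝ)*τ) = (m:ℝ) * Real.pi := by field_simp
    rw [h1, Real.sin_nat_mul_pi]
    simp
  have hIntcosIoo : ∀ c : ℝ, IntegrableOn (fun ω => Real.cos (ω*c)) (Ioo (0:ℝ) (Real.pi/τ)) := by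
    intro c
    refine MeasureTheory.IntegrableOn.mono_set ?_ Ioo_subset_Icc_self
    exact (Real.continuous_cos.comp (continuous_id.mul continuous_const)).continuousOn.integrableOn_compact
      isCompact_Icc
  -- ∫ of cos(m τ ω) over S ε tends to 0
  have hCosS : ∀ m : ℕ, 1 ≤ m →
      Tendsto (fun ε => ∫ ω in S ε, Real.cos (ω*((m:ℝ)*τ))) (𝓝[>] (0:ℝ)) (𝓝 0) := by
    intro m hm
    apply squeeze_zero_norm' (a := fun ε : ℝ => 2*ε) _ htwoeps
    filter_upwards [self_mem_nhdsWithin] with ε (hε : 0 < ε)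
    have hd : (∫ ω in S ε, Real.cos (ω*((m:ℝ)*τ)))
        = (∫ ω in Ioo (0:ℝ) (Real.pi/τ), Real.cos (ω*((m:ℝ)*τ)))
          - ∫ ω in Ioo (0:ℝ) (Real.pi/τ) ∩ Ioo (a-ε) (a+ε), Real.cos (ω*((m:ℝ)*τ)) := by
      rw [hSdiff ε]
      rw [MeasureTheory.integral_diff (hTmeas ε) (hIntcosIoo _) (hTsub ε)]
    rw [hd, hIcos m hm, zero_sub, norm_neg]
    have hfin : volume (Ioo (0:ℝ) (Real.pi/τ) ∩ Ioo (a-ε) (a+ε)) < ⊤ :=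
      lt_of_le_of_lt (measure_mono inter_subset_right) (by rw [Real.volume_Ioo]; exact ENNReal.ofReal_lt_top)
    calc ‖∫ ω in Ioo (0:ℝ) (Real.pi/τ) ∩ Ioo (a-ε) (a+ε), Real.cos (ω*((m:ℝ)*τ))‖
        ≤ 1 * (volume (Ioo (0:ℝ) (Real.pi/τ) ∩ Ioo (a-ε) (a+ε))).toReal := by
          apply norm_setIntegral_le_of_norm_le_const hfin
            (fun x _ => (Real.norm_eq_abs _).trans_le (Real.abs_cos_le_one _))
      _ ≤ 2*ε := by rw [one_mul]; exact hTvol ε hε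
  -- volume of S ε tends to π/τ
  have hVolS : Tendsto (fun ε => (volume (S ε)).toReal) (𝓝[>] (0:ℝ)) (𝓝 (Real.pi/τ)) := by
    have heq : ∀ ε : ℝ, 0 < ε → (volume (S ε)).toReal
        = Real.pi/τ - (volume (Ioo (0:ℝ) (Real.pi/τ) ∩ Ioo (a-ε) (a+ε))).toReal := by
      intro ε hε
      rw [hSdiff ε, measure_diff (hTsub ε) (hTmeas ε).nullMeasurableSet
        (lt_of_le_of_lt (measure_mono inter_subset_right)
          (by rw [Real.volume_Ioo]; exact ENNReal.ofReal_lt_top)).ne]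
      rw [ENNReal.toReal_sub_of_le (measure_mono (hTsub ε)) (by rw [Real.volume_Ioo]; exact ENNReal.ofReal_ne_top)]
      rw [Real.volume_Ioo, ENNReal.toReal_ofReal (by simp; positivity)]
      ring_nf
    have h0 : Tendsto (fun ε => (volume (Ioo (0:ℝ) (Real.pi/τ) ∩ Ioo (a-ε) (a+ε))).toReal)
        (𝓝[>] (0:ℝ)) (𝓝 0) := by
      apply squeeze_zero_norm' _ htwoeps
      filter_upwards [self_mem_nhdsWithin] with ε (hε : 0 < ε)
      rw [Real.norm_eq_abs, abs_of_nonneg ENNReal.toReal_nonneg]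
      exact hTvol ε hε
    have h1 : Tendsto (fun ε => Real.pi/τ
        - (volume (Ioo (0:ℝ) (Real.pi/τ) ∩ Ioo (a-ε) (a+ε))).toReal)
        (𝓝[>] (0:ℝ)) (𝓝 (Real.pi/τ - 0)) := tendsto_const_nhds.sub h0
    rw [sub_zero] at h1
    refine h1.congr' ?_
    filter_upwards [self_mem_nhdsWithin] with ε (hε : 0 < ε)
    exact (heq ε hε).symm
  -- The antiderivative for the principal value part
  set F : ℝ → ℝ := fun ω => (τ * Real.sin θ)⁻¹ *
    (Real.log (Real.sin ((ω*τ + θ)/2)) - Real.log (Real.sin ((ω*τ - θ)/2))) with hFdef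
  have hωτle : ∀ ω ∈ Icc (0:ℝ) (Real.pi/τ), ω * τ ≤ Real.pi := by
    intro ω hω
    calc ω * τ ≤ (Real.pi/τ) * τ := by nlinarith [hω.2]
      _ = Real.pi := div_mul_cancel₀ _ hτ.ne'
  have hFderiv : ∀ ω ∈ Icc (0:ℝ) (Real.pi/τ), ω ≠ a →
      HasDerivAt F (1/(Real.cos (ω*τ) - l)) ω := by
    intro ω hω hωa
    have hωτ0 : 0 ≤ ω * τ := mul_nonneg hω.1 hτ.le
    have hωτπ : ω * τ ≤ Real.pi := hωτle ω hω
    have hu0 : 0 < (ω*τ + θ)/2 := by linarith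
    have huπ : (ω*τ + θ)/2 < Real.pi := by linarith
    have hsinu : 0 < Real.sin ((ω*τ+θ)/2) := Real.sin_pos_of_pos_of_lt_pi hu0 huπ
    have hv1 : -Real.pi < (ω*τ - θ)/2 := by linarith
    have hv2 : (ω*τ - θ)/2 < Real.pi := by linarith
    have hvne : (ω*τ - θ)/2 ≠ 0 := by
      intro h
      apply hωa
      have h2 : ω * τ = θ := by linarith [(div_eq_zero_iff.mp h).resolve_right (by norm_num)]
      rw [hadef, eq_div_iff hτ.ne']; exact h2
    have hsinv : Real.sin ((ω*τ-θ)/2) ≠ 0 :=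
      fun h => hvne ((Real.sin_eq_zero_iff_of_lt_of_lt hv1 hv2).1 h)
    have h1 : HasDerivAt (fun x : ℝ => (x*τ+θ)/2) (τ/2) ω := by
      have := (((hasDerivAt_id ω).mul_const τ).add_const θ).div_const 2
      simpa using this
    have h2 : HasDerivAt (fun x : ℝ => (x*τ-θ)/2) (τ/2) ω := by
      have := (((hasDerivAt_id ω).mul_const τ).sub_const θ).div_const 2
      simpa using this
    have h3 := (h1.sin).log hsinu.ne'
    have h4 := (h2.sin).log hsinv
    have h5 := (h3.sub h4).const_mul ((τ * Real.sin θ)⁻¹)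
    refine h5.congr_deriv ?_
    symm
    rw [← hcosθ, Real.cos_sub_cos]
    have hθuv : Real.sin θ = Real.sin ((ω*τ+θ)/2) * Real.cos ((ω*τ-θ)/2)
        - Real.cos ((ω*τ+θ)/2) * Real.sin ((ω*τ-θ)/2) := by
      rw [← Real.sin_sub]; congr 1; ring
    have hs : Real.sin ((ω*τ+θ)/2) * Real.cos ((ω*τ-θ)/2)
        - Real.cos ((ω*τ+θ)/2) * Real.sin ((ω*τ-θ)/2) ≠ 0 := hθuv ▸ hsinθ.ne'
    rw [hθuv]
    generalize Real.sin ((ω*τ+θ)/2) = A at hsinu hs ⊢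
    generalize Real.sin ((ω*τ-θ)/2) = B at hsinv hs ⊢
    generalize Real.cos ((ω*τ+θ)/2) = C at hs ⊢
    generalize Real.cos ((ω*τ-θ)/2) = D at hs ⊢
    field_simp [hs, hsinu.ne', hsinv, hτ.ne']
    have hX : A*D - B*C ≠ 0 := by rwa [show A*D - B*C = A*D - C*B by ring]
    rw [show B*C - A*D = -(A*D - B*C) by ring, neg_div, div_self hX]
  -- principal value of the singular part tends to 0
  set ε₀ : ℝ := min a (Real.pi/τ - a) with hε₀def
  have hε₀ : 0 < ε₀ := lt_min ha0 (by linarith)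
  have hIoo : Ioo (0:ℝ) ε₀ ∈ 𝓝[>] (0:ℝ) := Ioo_mem_nhdsGT_of_mem ⟨le_refl 0, hε₀⟩
  have hJ0eq : ∀ ε ∈ Ioo (0:ℝ) ε₀, J 0 ε = (τ * Real.sin θ)⁻¹ *
      (Real.log (Real.sin (θ - ε*τ/2)) - Real.log (Real.sin (θ + ε*τ/2))) := by
    intro ε hε
    have hε0 : 0 < ε := hε.1
    have hεa : ε < a := lt_of_lt_of_le hε.2 (min_le_left _ _)
    have hεπ : a + ε < Real.pi/τ := by
      have := lt_of_lt_of_le hε.2 (min_le_right _ _); linarith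
    have hSeq : S ε = Ioc (0:ℝ) (a-ε) ∪ Ico (a+ε) (Real.pi/τ) := by
      rw [hSdef]
      ext ω
      simp only [mem_diff, mem_Ioo, mem_union, mem_Ioc, mem_Ico, not_and, not_lt]
      constructor
      · rintro ⟨⟨h1, h2⟩, h3⟩
        rcases le_or_gt ω (a-ε) with h | h
        · exact Or.inl ⟨h1, h⟩
        · exact Or.inr ⟨h3 h, h2⟩
      · rintro (⟨h1, h2⟩ | ⟨h1, h2⟩)
        · exact ⟨⟨h1, by linarith⟩, fun h => absurd h (not_lt.2 h2)⟩
        · exact ⟨⟨by linarith, h2⟩, fun _ => h1⟩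
    have hJ00 : J 0 ε = ∫ ω in S ε, 1 / (Real.cos (ω*τ) - l) := by
      rw [hJdef]; simp only [Nat.cast_zero, zero_mul, mul_zero, Real.cos_zero]
    have h0' := hIntAux 0 ε hε0
    simp only [mul_zero, Real.cos_zero] at h0'
    have hsub1 : Ioc (0:ℝ) (a-ε) ⊆ S ε := by rw [hSeq]; exact subset_union_left
    have hsub2 : Ico (a+ε) (Real.pi/τ) ⊆ S ε := by rw [hSeq]; exact subset_union_right
    have hdisj : Disjoint (Ioc (0:ℝ) (a-ε)) (Ico (a+ε) (Real.pi/τ)) := by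
      rw [Set.disjoint_left]
      rintro ω ⟨_, h1⟩ ⟨h2, _⟩
      linarith
    have hsplit : J 0 ε = (∫ ω in Ioc (0:ℝ) (a-ε), 1 / (Real.cos (ω*τ) - l))
        + ∫ ω in Ico (a+ε) (Real.pi/τ), 1 / (Real.cos (ω*τ) - l) := by
      rw [hJ00, hSeq]
      exact MeasureTheory.setIntegral_union hdisj measurableSet_Ico
        (h0'.mono_set hsub1) (h0'.mono_set hsub2)
    have hcont : ∀ b c : ℝ, b ≤ c → Icc b c ⊆ Icc (0:ℝ) (Real.pi/τ) → (a ∉ Icc b c) →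
        ContinuousOn (fun ω => 1 / (Real.cos (ω*τ) - l)) (Icc b c) := by
      intro b c hbc hsub hna
      refine ContinuousOn.div continuousOn_const
        ((Real.continuous_cos.comp (continuous_id.mul continuous_const)).sub
          continuous_const).continuousOn ?_
      intro x hx
      exact hne x (hsub hx) (fun h => hna (h ▸ hx))
    have hmain : ∀ b c : ℝ, b ≤ c → Icc b c ⊆ Icc (0:ℝ) (Real.pi/τ) → (a ∉ Icc b c) →
        (∫ ω in Ioc b c, 1 / (Real.cos (ω*τ) - l)) = F c - F b := by
      intro b c hbc hsub hna
      rw [← intervalIntegral.integral_of_le hbc]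
      apply intervalIntegral.integral_eq_sub_of_hasDerivAt
      · intro x hx
        rw [uIcc_of_le hbc] at hx
        exact hFderiv x (hsub hx) (fun h => hna (h ▸ hx))
      · apply ContinuousOn.intervalIntegrable
        rw [uIcc_of_le hbc]
        exact hcont b c hbc hsub hna
    have h01 : (0:ℝ) ≤ a - ε := by linarith
    have h02 : a + ε ≤ Real.pi/τ := by linarith
    have e1 : (∫ ω in Ioc (0:ℝ) (a-ε), 1 / (Real.cos (ω*τ) - l)) = F (a-ε) - F 0 := by
      apply hmain 0 (a-ε) h01
      · intro x hx; exact ⟨hx.1, by linarith [hx.2]⟩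
      · rintro ⟨-, h⟩; linarith
    have e2 : (∫ ω in Ico (a+ε) (Real.pi/τ), 1 / (Real.cos (ω*τ) - l))
        = F (Real.pi/τ) - F (a+ε) := by
      rw [MeasureTheory.integral_Ico_eq_integral_Ioo, ← MeasureTheory.integral_Ioc_eq_integral_Ioo]
      apply hmain (a+ε) (Real.pi/τ) h02
      · intro x hx; exact ⟨by linarith [hx.1], hx.2⟩
      · rintro ⟨h, -⟩; linarith
    have hF0 : F 0 = 0 := by
      rw [hFdef]
      simp only
      rw [show ((0:ℝ)*τ+θ)/2 = θ/2 by ring, show ((0:ℝ)*τ-θ)/2 = -(θ/2) by ring,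
        Real.sin_neg, Real.log_neg_eq_log, sub_self, mul_zero]
    have hFπ : F (Real.pi/τ) = 0 := by
      rw [hFdef]
      simp only
      rw [show ((Real.pi/τ)*τ+θ)/2 = (Real.pi+θ)/2 by field_simp,
        show ((Real.pi/τ)*τ-θ)/2 = (Real.pi-θ)/2 by field_simp,
        show (Real.pi+θ)/2 = Real.pi - (Real.pi-θ)/2 by ring, Real.sin_pi_sub,
        sub_self, mul_zero]
    have hFa1 : F (a-ε) = (τ * Real.sin θ)⁻¹ *
        (Real.log (Real.sin (θ - ε*τ/2)) - Real.log (Real.sin (ε*τ/2))) := by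
      rw [hFdef]
      simp only
      rw [show ((a-ε)*τ+θ)/2 = θ - ε*τ/2 by rw [sub_mul, haτ]; ring,
        show ((a-ε)*τ-θ)/2 = -(ε*τ/2) by rw [sub_mul, haτ]; ring,
        Real.sin_neg, Real.log_neg_eq_log]
    have hFa2 : F (a+ε) = (τ * Real.sin θ)⁻¹ *
        (Real.log (Real.sin (θ + ε*τ/2)) - Real.log (Real.sin (ε*τ/2))) := by
      rw [hFdef]
      simp only
      rw [show ((a+ε)*τ+θ)/2 = θ + ε*τ/2 by rw [add_mul, haτ]; ring,
        show ((a+ε)*τ-θ)/2 = ε*τ/2 by rw [add_mul, haτ]; ring]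
    rw [hsplit, e1, e2, hF0, hFπ, hFa1, hFa2]
    ring
  have hJ0lim : Tendsto (J 0) (𝓝[>] (0:ℝ)) (𝓝 0) := by
    have harg1 : Tendsto (fun ε : ℝ => θ - ε*τ/2) (𝓝 (0:ℝ)) (𝓝 θ) := by
      have h : Tendsto (fun ε : ℝ => θ - ε*τ/2) (𝓝 (0:ℝ)) (𝓝 (θ - 0*τ/2)) :=
        tendsto_const_nhds.sub ((tendsto_id.mul_const τ).div_const 2)
      simpa using h
    have harg2 : Tendsto (fun ε : ℝ => θ + ε*τ/2) (𝓝 (0:ℝ)) (𝓝 θ) := by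
      have h : Tendsto (fun ε : ℝ => θ + ε*τ/2) (𝓝 (0:ℝ)) (𝓝 (θ + 0*τ/2)) :=
        tendsto_const_nhds.add ((tendsto_id.mul_const τ).div_const 2)
      simpa using h
    have hlog1 : Tendsto (fun ε : ℝ => Real.log (Real.sin (θ - ε*τ/2))) (𝓝 (0:ℝ))
        (𝓝 (Real.log (Real.sin θ))) :=
      (Real.continuousAt_log hsinθ.ne').tendsto.comp ((Real.continuous_sin.tendsto θ).comp harg1)
    have hlog2 : Tendsto (fun ε : ℝ => Real.log (Real.sin (θ + ε*τ/2))) (𝓝 (0:ℝ))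
        (𝓝 (Real.log (Real.sin θ))) :=
      (Real.continuousAt_log hsinθ.ne').tendsto.comp ((Real.continuous_sin.tendsto θ).comp harg2)
    have hG : Tendsto (fun ε : ℝ => (τ * Real.sin θ)⁻¹ *
        (Real.log (Real.sin (θ - ε*τ/2)) - Real.log (Real.sin (θ + ε*τ/2))))
        (𝓝 (0:ℝ)) (𝓝 ((τ * Real.sin θ)⁻¹ *
          (Real.log (Real.sin θ) - Real.log (Real.sin θ)))) :=
      (hlog1.sub hlog2).const_mul _
    have hG0 : (τ * Real.sin θ)⁻¹ * (Real.log (Real.sin θ) - Real.log (Real.sin θ)) = 0 := by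
      rw [sub_self, mul_zero]
    rw [hG0] at hG
    refine (hG.mono_left nhdsWithin_le_nhds).congr' ?_
    filter_upwards [hIoo] with ε hε
    exact (hJ0eq ε hε).symm
  -- the limit statement for every m
  have hmeasS : ∀ ε : ℝ, MeasurableSet (S ε) := by
    intro ε; rw [hSdef]; exact measurableSet_Ioo.diff measurableSet_Ioo
  have hfinS : ∀ ε : ℝ, volume (S ε) < ⊤ := by
    intro ε
    refine lt_of_le_of_lt (measure_mono diff_subset) ?_
    rw [Real.volume_Ioo]; exact ENNReal.ofReal_lt_top
  have hneS' : ∀ ε : ℝ, 0 < ε → ∀ ω ∈ S ε, Real.cos (ω*τ) - l ≠ 0 := by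
    intro ε hε ω hω
    exact hneS ε hε ω (hSsub ε hω)
  have key : ∀ m : ℕ, Tendsto (J m) (𝓝[>] (0:ℝ))
      (𝓝 (Real.pi/τ * ((Polynomial.Chebyshev.U ℝ ((m:ℤ) - 1)).eval l))) ∧
      Tendsto (J (m+1)) (𝓝[>] (0:ℝ))
      (𝓝 (Real.pi/τ * ((Polynomial.Chebyshev.U ℝ (((m+1:ℕ):ℤ) - 1)).eval l))) := by
    have P0 : Tendsto (J 0) (𝓝[>] (0:ℝ))
        (𝓝 (Real.pi/τ * ((Polynomial.Chebyshev.U ℝ (((0:ℕ):ℤ) - 1)).eval l))) := by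
      have : Real.pi/τ * ((Polynomial.Chebyshev.U ℝ (((0:ℕ):ℤ) - 1)).eval l) = 0 := by
        norm_num [Polynomial.Chebyshev.U_neg_one]
      rw [this]; exact hJ0lim
    have P1 : Tendsto (J 1) (𝓝[>] (0:ℝ))
        (𝓝 (Real.pi/τ * ((Polynomial.Chebyshev.U ℝ (((1:ℕ):ℤ) - 1)).eval l))) := by
      have hJ1 : ∀ ε : ℝ, 0 < ε → J 1 ε = (volume (S ε)).toReal + l * J 0 ε := by
        intro ε hε
        have h0' := hIntAux 0 ε hε
        simp only [mul_zero, Real.cos_zero] at h0'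
        have hJ1e : J 1 ε = ∫ ω in S ε,
            (1 + l * (1 / (Real.cos (ω*τ) - l))) := by
          rw [hJdef]
          simp only [Nat.cast_one, one_mul]
          apply MeasureTheory.setIntegral_congr_fun (hmeasS ε)
          intro ω hω
          have hd := hneS' ε hε ω hω
          field_simp
          ring
        rw [hJ1e, MeasureTheory.integral_add (integrableOn_const (C := (1:ℝ)) (hfinS ε).ne)
          (h0'.const_mul l)]
        rw [MeasureTheory.integral_const, MeasureTheory.integral_const_mul]
        have hJ0e : J 0 ε = ∫ ω in S ε, 1 / (Real.cos (ω*τ) - l) := by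
          rw [hJdef]; simp only [Nat.cast_zero, zero_mul, mul_zero, Real.cos_zero]
        rw [← hJ0e]; simp; rfl
      have hval : Real.pi/τ * ((Polynomial.Chebyshev.U ℝ (((1:ℕ):ℤ) - 1)).eval l)
          = Real.pi/τ + l * 0 := by
        norm_num [Polynomial.Chebyshev.U_zero]
      rw [hval]
      refine (hVolS.add (hJ0lim.const_mul l)).congr' ?_
      filter_upwards [self_mem_nhdsWithin] with ε (hε : 0 < ε)
      exact (hJ1 ε hε).symm
    have step : ∀ m : ℕ,
        Tendsto (J m) (𝓝[>] (0:ℝ))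
          (𝓝 (Real.pi/τ * ((Polynomial.Chebyshev.U ℝ ((m:ℤ) - 1)).eval l))) →
        Tendsto (J (m+1)) (𝓝[>] (0:ℝ))
          (𝓝 (Real.pi/τ * ((Polynomial.Chebyshev.U ℝ (((m+1:ℕ):ℤ) - 1)).eval l))) →
        Tendsto (J (m+2)) (𝓝[>] (0:ℝ))
          (𝓝 (Real.pi/τ * ((Polynomial.Chebyshev.U ℝ (((m+2:ℕ):ℤ) - 1)).eval l))) := by
      intro m hm hm1
      have hrec : ∀ ε : ℝ, 0 < ε → J (m+2) ε
          = 2*l * J (m+1) ε + 2 * (∫ ω in S ε, Real.cos (ω*(((m+1:ℕ):ℝ)*τ))) - J m ε := by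
        intro ε hε
        have hi1 := hIntAux (((m:ℝ)+1)*τ) ε hε
        have hi0 := hIntAux ((m:ℝ)*τ) ε hε
        have hicos : IntegrableOn (fun ω => Real.cos (ω*(((m:ℝ)+1)*τ))) (S ε) :=
          (hIntcosIoo (((m:ℝ)+1)*τ)).mono_set diff_subset
        have hJe : J (m+2) ε = ∫ ω in S ε,
            (2*l * (Real.cos (ω*(((m:ℝ)+1)*τ)) / (Real.cos (ω*τ) - l))
              + 2 * Real.cos (ω*(((m:ℝ)+1)*τ))
              - Real.cos (ω*((m:ℝ)*τ)) / (Real.cos (ω*τ) - l)) := by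
          rw [hJdef]
          apply MeasureTheory.setIntegral_congr_fun (hmeasS ε)
          intro ω hω
          have hd := hneS' ε hε ω hω
          beta_reduce
          have h1 : ω*(((m+2:ℕ):ℝ)*τ) = ω*(((m:ℝ)+1)*τ) + ω*τ := by push_cast; ring
          have h2 : ω*((m:ℝ)*τ) = ω*(((m:ℝ)+1)*τ) - ω*τ := by ring
          rw [h1, h2, Real.cos_add, Real.cos_sub]
          field_simp
          ring
        have eA : IntegrableOn (fun ω => 2*l * (Real.cos (ω*(((m:ℝ)+1)*τ)) / (Real.cos (ω*τ) - l))
            + 2 * Real.cos (ω*(((m:ℝ)+1)*τ))) (S ε) :=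
          (hi1.const_mul (2*l)).add (hicos.const_mul 2)
        have e1 : (∫ ω in S ε, (2*l * (Real.cos (ω*(((m:ℝ)+1)*τ)) / (Real.cos (ω*τ) - l))
              + 2 * Real.cos (ω*(((m:ℝ)+1)*τ))
              - Real.cos (ω*((m:ℝ)*τ)) / (Real.cos (ω*τ) - l)))
            = (∫ ω in S ε, (2*l * (Real.cos (ω*(((m:ℝ)+1)*τ)) / (Real.cos (ω*τ) - l))
              + 2 * Real.cos (ω*(((m:ℝ)+1)*τ))))
              - ∫ ω in S ε, Real.cos (ω*((m:ℝ)*τ)) / (Real.cos (ω*τ) - l) :=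
          MeasureTheory.integral_sub eA hi0
        have e2 : (∫ ω in S ε, (2*l * (Real.cos (ω*(((m:ℝ)+1)*τ)) / (Real.cos (ω*τ) - l))
              + 2 * Real.cos (ω*(((m:ℝ)+1)*τ))))
            = (∫ ω in S ε, 2*l * (Real.cos (ω*(((m:ℝ)+1)*τ)) / (Real.cos (ω*τ) - l)))
              + ∫ ω in S ε, 2 * Real.cos (ω*(((m:ℝ)+1)*τ)) :=
          MeasureTheory.integral_add (hi1.const_mul (2*l)) (hicos.const_mul 2)
        rw [hJe, e1, e2, MeasureTheory.integral_const_mul, MeasureTheory.integral_const_mul]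
        have hJm1 : J (m+1) ε = ∫ ω in S ε,
            Real.cos (ω*(((m:ℝ)+1)*τ)) / (Real.cos (ω*τ) - l) := by
          simp only [hJdef, Nat.cast_add, Nat.cast_one]
        have hJm : J m ε = ∫ ω in S ε, Real.cos (ω*((m:ℝ)*τ)) / (Real.cos (ω*τ) - l) := by
          rw [hJdef]
        rw [← hJm1, ← hJm]
        push_cast
        ring
      have hcoslim := hCosS (m+1) (by omega)
      have hlim := ((hm1.const_mul (2*l)).add (hcoslim.const_mul 2)).sub hm
      have hval : Real.pi/τ * ((Polynomial.Chebyshev.U ℝ (((m+2:ℕ):ℤ) - 1)).eval l)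
          = 2*l * (Real.pi/τ * ((Polynomial.Chebyshev.U ℝ (((m+1:ℕ):ℤ) - 1)).eval l))
            + 2 * 0 - Real.pi/τ * ((Polynomial.Chebyshev.U ℝ ((m:ℤ) - 1)).eval l) := by
        push_cast
        rw [show (m:ℤ) + 2 - 1 = ((m:ℤ) - 1) + 2 by ring,
          show (m:ℤ) + 1 - 1 = ((m:ℤ) - 1) + 1 by ring,
          Polynomial.Chebyshev.U_add_two]
        simp only [Polynomial.eval_sub, Polynomial.eval_mul, Polynomial.eval_ofNat,
          Polynomial.eval_X]
        ring
      rw [hval]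
      refine hlim.congr' ?_
      filter_upwards [self_mem_nhdsWithin] with ε (hε : 0 < ε)
      exact (hrec ε hε).symm
    intro m
    induction m with
    | zero => exact ⟨P0, P1⟩
    | succ n ih => exact ⟨ih.2, step n ih.1 ih.2⟩
  have hk' := (key k).1
  have hfin := hk'.const_mul (τ/Real.pi)
  have : (τ/Real.pi) * (Real.pi/τ * ((Polynomial.Chebyshev.U ℝ ((k:ℤ) - 1)).eval l))
      = (Polynomial.Chebyshev.U ℝ ((k:ℤ) - 1)).eval l := by
    field_simp
  rw [this] at hfin
  exact hfin
end

section
/- Let a > 0 and let f : ℝ → ℂ be the function f(ω) = 1/(cos(ωτ) − λ) for fixed τ > 0 and λ > 1. Then for t = kτ with k ∈ ℕ, the integral (τ/2π)∫_{−π/τ}^{π/τ} e^{−iωt}/(cos(ωτ) − λ) dω equals −U_{k−1}(λ̂) evaluated by analytic continuation, and in particular for λ > 1 the integral equals −(λ − √(λ²−1))^k / √(λ²−1). -/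
open Complex Real intervalIntegral

-- basic facts about s and r
section
variable {l : ℝ} (hl : 1 < l)

lemma cos_sub_ne (l : ℝ) (hl : 1 < l) (θ : ℝ) : Real.cos θ - l ≠ 0 := by
  have := Real.cos_le_one θ; linarith

-- real integral of (cos θ - l)⁻¹
lemma F0_real (l : ℝ) (hl : 1 < l) :
    ∫ θ in (-π)..π, (Real.cos θ - l)⁻¹ = -(2 * π) / Real.sqrt (l ^ 2 - 1) := by
  set s := Real.sqrt (l ^ 2 - 1) with hs_def
  have hs2 : s ^ 2 = l ^ 2 - 1 := Real.sq_sqrt (by nlinarith)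
  have hs0 : 0 < s := Real.sqrt_pos.2 (by nlinarith)
  set r := l - s with hr_def
  have hr0 : 0 < r := by nlinarith
  have hr1 : r < 1 := by nlinarith
  have hr2 : r ^ 2 = 2 * l * r - 1 := by rw [hr_def]; nlinarith
  have hden : ∀ θ : ℝ, 0 < 1 - r * Real.cos θ := by
    intro θ
    have h1 : r * Real.cos θ ≤ r * 1 := by
      have := Real.cos_le_one θ
      nlinarith [Real.neg_one_le_cos θ]
    nlinarith
  set H : ℝ → ℝ := fun θ =>
    -(s⁻¹) * (θ + 2 * Real.arctan (r * Real.sin θ / (1 - r * Real.cos θ))) with hH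
  have hderiv : ∀ θ ∈ Set.uIcc (-π) π, HasDerivAt H ((Real.cos θ - l)⁻¹) θ := by
    intro θ _
    have hd := hden θ
    have hdne : (1 - r * Real.cos θ) ≠ 0 := ne_of_gt hd
    have hf : HasDerivAt (fun θ => r * Real.sin θ) (r * Real.cos θ) θ :=
      (Real.hasDerivAt_sin θ).const_mul r
    have hg : HasDerivAt (fun θ => 1 - r * Real.cos θ) (r * Real.sin θ) θ := by
      have := ((Real.hasDerivAt_cos θ).const_mul r).const_sub 1
      simpa using this
    have hu : HasDerivAt (fun θ => r * Real.sin θ / (1 - r * Real.cos θ))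
        ((r * Real.cos θ * (1 - r * Real.cos θ) - r * Real.sin θ * (r * Real.sin θ)) /
          (1 - r * Real.cos θ) ^ 2) θ := hf.div hg hdne
    have ha := hu.arctan
    have hlin : HasDerivAt (fun θ : ℝ => θ) 1 θ := hasDerivAt_id θ
    have := (hlin.add (ha.const_mul 2)).const_mul (-(s⁻¹))
    refine this.congr_deriv ?_
    symm
    have pyth : Real.sin θ ^ 2 + Real.cos θ ^ 2 = 1 := Real.sin_sq_add_cos_sq θ
    have hcl : Real.cos θ - l ≠ 0 := cos_sub_ne l hl θ
    have h1 : (1 - r * Real.cos θ) ^ 2 + (r * Real.sin θ) ^ 2 = 2 * r * (l - Real.cos θ) := by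
      linear_combination r ^ 2 * pyth + hr2
    have h1pos : (0:ℝ) < 1 + (r * Real.sin θ / (1 - r * Real.cos θ)) ^ 2 := by positivity
    set c := Real.cos θ; set n := Real.sin θ
    have hlc : l - c ≠ 0 := fun h => hcl (by linarith)
    rw [div_pow]
    have h2 : 1 + (r * n) ^ 2 / (1 - r * c) ^ 2 = (2 * r * (l - c)) / (1 - r * c) ^ 2 := by
      field_simp
      linear_combination h1
    have h3 : r * c * (1 - r * c) - r * n * (r * n) = r * (c - r) := by
      linear_combination (-(r ^ 2)) * pyth
    rw [h2, h3]
    have key : 1 / (2 * r * (l - c) / (1 - r * c) ^ 2) * (r * (c - r) / (1 - r * c) ^ 2)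
        = (c - r) / (2 * (l - c)) := by
      field_simp
    rw [key, hr_def]
    field_simp
    ring
  have hcont : Continuous fun θ : ℝ => (Real.cos θ - l)⁻¹ := by
    exact (Real.continuous_cos.sub continuous_const).inv₀ (cos_sub_ne l hl)
  rw [intervalIntegral.integral_eq_sub_of_hasDerivAt hderiv
    (hcont.intervalIntegrable _ _)]
  rw [hH]
  simp [Real.sin_pi, Real.arctan_zero]
  field_simp
  ring

lemma sin_int_zero (l : ℝ) (hl : 1 < l) :
    ∫ θ in (-π)..π, Real.sin θ * (Real.cos θ - l)⁻¹ = 0 := by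
  have hderiv : ∀ θ ∈ Set.uIcc (-π) π,
      HasDerivAt (fun θ => -Real.log (l - Real.cos θ))
        (Real.sin θ * (Real.cos θ - l)⁻¹) θ := by
    intro θ _
    have hne : l - Real.cos θ ≠ 0 := by
      have := cos_sub_ne l hl θ; intro h; exact this (by linarith)
    have h1 : HasDerivAt (fun θ => l - Real.cos θ) (Real.sin θ) θ := by
      simpa using ((Real.hasDerivAt_cos θ).const_sub l)
    have := (h1.log hne).neg
    refine this.congr_deriv ?_
    symm
    have : Real.cos θ - l ≠ 0 := cos_sub_ne l hl θ
    field_simp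
    ring
  have hcont : Continuous fun θ : ℝ => Real.sin θ * (Real.cos θ - l)⁻¹ :=
    Real.continuous_sin.mul ((Real.continuous_cos.sub continuous_const).inv₀ (cos_sub_ne l hl))
  rw [intervalIntegral.integral_eq_sub_of_hasDerivAt hderiv (hcont.intervalIntegrable _ _)]
  simp [Real.cos_neg]

lemma cos_ne_complex (l : ℝ) (hl : 1 < l) (θ : ℝ) : ((Real.cos θ : ℂ) - l) ≠ 0 := by
  have : ((Real.cos θ - l : ℝ) : ℂ) ≠ 0 := Complex.ofReal_ne_zero.2 (cos_sub_ne l hl θ)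
  simpa using this

lemma exp_int_zero (m : ℕ) (hm : 1 ≤ m) :
    ∫ θ in (-π)..π, Complex.exp (-I * θ * m) = 0 := by
  have hm' : ((m:ℕ) : ℂ) ≠ 0 := Nat.cast_ne_zero.2 (by omega)
  have hc : (-I * m : ℂ) ≠ 0 := mul_ne_zero (neg_ne_zero.2 Complex.I_ne_zero) hm'
  have h1 : (fun θ : ℝ => Complex.exp (-I * θ * m)) = fun θ : ℝ => Complex.exp ((-I * m) * θ) := by
    funext θ; ring_nf
  rw [h1, integral_exp_mul_complex hc]
  have h2 : Complex.exp (-I * m * π) = Complex.exp (-I * m * -π) := by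
    rw [show (-I * m * π : ℂ) = -I * m * -π + ((-(m:ℤ) : ℤ)) * (2 * π * I) by push_cast; ring,
      Complex.exp_add, Complex.exp_int_mul_two_pi_mul_I, mul_one]
  push_cast
  rw [h2, sub_self, zero_div]

lemma G0 (l : ℝ) (hl : 1 < l) :
    ∫ θ in (-π)..π, ((Real.cos θ : ℂ) - l)⁻¹
      = -(2 * π) / (Real.sqrt (l ^ 2 - 1) : ℂ) := by
  have h1 : (fun θ : ℝ => ((Real.cos θ : ℂ) - l)⁻¹)
      = fun θ : ℝ => (((Real.cos θ - l)⁻¹ : ℝ) : ℂ) := by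
    funext θ; push_cast; ring
  rw [h1, intervalIntegral.integral_ofReal, F0_real l hl]
  push_cast
  ring

lemma hint_all (l : ℝ) (hl : 1 < l) (m : ℕ) :
    IntervalIntegrable (fun θ : ℝ => Complex.exp (-I * θ * m) / ((Real.cos θ : ℂ) - l))
      MeasureTheory.volume (-π) π := by
  apply Continuous.intervalIntegrable
  apply Continuous.div
  · exact Complex.continuous_exp.comp (by continuity)
  · exact (Complex.continuous_ofReal.comp Real.continuous_cos).sub continuous_const
  · exact fun θ => cos_ne_complex l hl θ

lemma G1 (l : ℝ) (hl : 1 < l) :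
    ∫ θ in (-π)..π, Complex.exp (-I * θ * (1 : ℕ)) / ((Real.cos θ : ℂ) - l)
      = -(2 * π) * ((l - Real.sqrt (l ^ 2 - 1) : ℝ) : ℂ) / (Real.sqrt (l ^ 2 - 1) : ℂ) := by
  have hs0 : (0:ℝ) < Real.sqrt (l ^ 2 - 1) := Real.sqrt_pos.2 (by nlinarith)
  have h1 : (fun θ : ℝ => Complex.exp (-I * θ * (1 : ℕ)) / ((Real.cos θ : ℂ) - l))
      = fun θ : ℝ => (1 : ℂ) + (l : ℂ) * ((Real.cos θ : ℂ) - l)⁻¹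
          - I * (((Real.sin θ * (Real.cos θ - l)⁻¹ : ℝ)) : ℂ) := by
    funext θ
    have hne := cos_ne_complex l hl θ
    have he : Complex.exp (-I * θ * (1 : ℕ)) = (Real.cos θ : ℂ) - (Real.sin θ : ℂ) * I := by
      rw [show (-I * θ * (1 : ℕ) : ℂ) = ((-θ : ℝ) : ℂ) * I by push_cast; ring,
        Complex.exp_mul_I, ← Complex.ofReal_cos, ← Complex.ofReal_sin, Real.cos_neg, Real.sin_neg]
      push_cast
      ring
    rw [he, Complex.ofReal_mul, Complex.ofReal_inv, Complex.ofReal_sub]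
    have hne' : Complex.cos (θ:ℂ) - (l:ℂ) ≠ 0 := by rwa [← Complex.ofReal_cos]
    field_simp [hne']
    ring
  rw [h1]
  have i1 : IntervalIntegrable (fun θ : ℝ => (1 : ℂ) + (l : ℂ) * ((Real.cos θ : ℂ) - l)⁻¹)
      MeasureTheory.volume (-π) π := by
    apply Continuous.intervalIntegrable
    exact continuous_const.add (continuous_const.mul
      (((Complex.continuous_ofReal.comp Real.continuous_cos).sub continuous_const).inv₀
        (cos_ne_complex l hl)))
  have i2 : IntervalIntegrable (fun θ : ℝ => I * (((Real.sin θ * (Real.cos θ - l)⁻¹ : ℝ)) : ℂ))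
      MeasureTheory.volume (-π) π := by
    apply Continuous.intervalIntegrable
    apply continuous_const.mul
    exact Complex.continuous_ofReal.comp (Real.continuous_sin.mul
      ((Real.continuous_cos.sub continuous_const).inv₀ (cos_sub_ne l hl)))
  rw [intervalIntegral.integral_sub i1 i2, intervalIntegral.integral_add
    (intervalIntegrable_const) (by
      apply Continuous.intervalIntegrable
      exact continuous_const.mul
        (((Complex.continuous_ofReal.comp Real.continuous_cos).sub continuous_const).inv₀
          (cos_ne_complex l hl))),
    intervalIntegral.integral_const_mul, intervalIntegral.integral_const_mul,
    G0 l hl, intervalIntegral.integral_ofReal, sin_int_zero l hl]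
  simp only [intervalIntegral.integral_const, Complex.ofReal_zero, mul_zero, sub_zero, smul_eq_mul,
    mul_one, Complex.real_smul]
  have hsne : ((Real.sqrt (l ^ 2 - 1) : ℝ) : ℂ) ≠ 0 := Complex.ofReal_ne_zero.2 hs0.ne'
  push_cast
  field_simp
  ring

lemma Grec (l : ℝ) (hl : 1 < l) (k : ℕ) :
    (∫ θ in (-π)..π, Complex.exp (-I * θ * ((k:ℕ)+2 : ℕ)) / ((Real.cos θ : ℂ) - l))
      + (∫ θ in (-π)..π, Complex.exp (-I * θ * (k : ℕ)) / ((Real.cos θ : ℂ) - l))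
    = 2 * l * ∫ θ in (-π)..π, Complex.exp (-I * θ * ((k:ℕ)+1 : ℕ)) / ((Real.cos θ : ℂ) - l) := by
  rw [← intervalIntegral.integral_add (hint_all l hl (k+2)) (hint_all l hl k)]
  have key : ∀ θ : ℝ,
      Complex.exp (-I * θ * ((k:ℕ)+2 : ℕ)) / ((Real.cos θ : ℂ) - l)
        + Complex.exp (-I * θ * (k : ℕ)) / ((Real.cos θ : ℂ) - l)
      = 2 * Complex.exp (-I * θ * ((k:ℕ)+1 : ℕ))
        + 2 * l * (Complex.exp (-I * θ * ((k:ℕ)+1 : ℕ)) / ((Real.cos θ : ℂ) - l)) := by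
    intro θ
    have hne := cos_ne_complex l hl θ
    have ek : Complex.exp (-I * θ * ((k:ℕ)+2 : ℕ)) + Complex.exp (-I * θ * (k : ℕ))
        = Complex.exp (-I * θ * ((k:ℕ)+1 : ℕ)) * (2 * (Real.cos θ : ℂ)) := by
      rw [Complex.ofReal_cos, Complex.two_cos, mul_add, ← Complex.exp_add, ← Complex.exp_add,
        add_comm]
      congr 2 <;> push_cast <;> ring
    rw [← add_div, ek]
    have hne' : Complex.cos (θ:ℂ) - (l:ℂ) ≠ 0 := by rwa [← Complex.ofReal_cos]
    field_simp [hne']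
    ring
  rw [intervalIntegral.integral_congr (g := fun θ =>
      2 * Complex.exp (-I * θ * ((k:ℕ)+1 : ℕ))
        + 2 * l * (Complex.exp (-I * θ * ((k:ℕ)+1 : ℕ)) / ((Real.cos θ : ℂ) - l)))
    (fun θ _ => key θ)]
  rw [intervalIntegral.integral_add (by
      apply Continuous.intervalIntegrable
      exact continuous_const.mul (Complex.continuous_exp.comp (by continuity)))
    ((hint_all l hl (k+1)).const_mul _), intervalIntegral.integral_const_mul,
    intervalIntegral.integral_const_mul, exp_int_zero (k+1) (by omega)]
  ring

lemma Gk (l : ℝ) (hl : 1 < l) (k : ℕ) :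
    ∫ θ in (-π)..π, Complex.exp (-I * θ * (k : ℕ)) / ((Real.cos θ : ℂ) - l)
      = -(2 * π) * ((l - Real.sqrt (l ^ 2 - 1) : ℝ) : ℂ) ^ k / (Real.sqrt (l ^ 2 - 1) : ℂ) := by
  set s := Real.sqrt (l ^ 2 - 1) with hs_def
  have hs2 : s ^ 2 = l ^ 2 - 1 := Real.sq_sqrt (by nlinarith)
  have hs0 : 0 < s := Real.sqrt_pos.2 (by nlinarith)
  have hsne : ((s : ℝ) : ℂ) ≠ 0 := Complex.ofReal_ne_zero.2 hs0.ne'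
  set r := l - s with hr_def
  have hr2' : r ^ 2 = 2 * l * r - 1 := by rw [hr_def]; nlinarith
  have hr2 : ((r:ℝ):ℂ) ^ 2 = 2 * (l:ℂ) * ((r:ℝ):ℂ) - 1 := by
    exact_mod_cast congrArg (fun x : ℝ => (x : ℂ)) hr2'
  suffices h : ∀ k : ℕ,
      (∫ θ in (-π)..π, Complex.exp (-I * θ * (k : ℕ)) / ((Real.cos θ : ℂ) - l)
        = -(2 * π) * ((r : ℝ) : ℂ) ^ k / ((s:ℝ) : ℂ)) ∧
      (∫ θ in (-π)..π, Complex.exp (-I * θ * ((k+1 : ℕ)) ) / ((Real.cos θ : ℂ) - l)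
        = -(2 * π) * ((r : ℝ) : ℂ) ^ (k+1) / ((s:ℝ) : ℂ)) from (h k).1
  intro k
  induction k with
  | zero =>
    constructor
    · simpa using G0 l hl
    · simp only [zero_add, pow_one, hr_def, hs_def]
      exact G1 l hl
  | succ n ih =>
    refine ⟨ih.2, ?_⟩
    have hrec := Grec l hl n
    rw [ih.1, ih.2] at hrec
    have hA : (∫ θ in (-π)..π, Complex.exp (-I * θ * ((n+2 : ℕ)) ) / ((Real.cos θ : ℂ) - l))
        = 2 * l * (-(2 * π) * ((r : ℝ) : ℂ) ^ (n+1) / ((s:ℝ) : ℂ))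
          - -(2 * π) * ((r : ℝ) : ℂ) ^ n / ((s:ℝ) : ℂ) := by
      linear_combination hrec
    have pow2 : ((r:ℝ):ℂ) ^ (n+2) = 2 * (l:ℂ) * ((r:ℝ):ℂ) ^ (n+1) - ((r:ℝ):ℂ) ^ n := by
      linear_combination (((r:ℝ):ℂ) ^ n) * hr2
    rw [hA, show ((n:ℕ)+1+1 : ℕ) = ((n:ℕ)+2 : ℕ) from rfl, pow2]
    ring


/-- for `τ > 0`, `λ > 1` and `t = kτ` with `k ≥ 1`, the contour-free integral
`(τ/2π) ∫_{−π/τ}^{π/τ} e^{−iωt}/(cos(ωτ) − λ) dω` equals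
`−(λ − √(λ²−1))^k / √(λ²−1)`. -/
theorem chebyshev_U_integral_analytic_continuation (τ l : ℝ) (hτ : 0 < τ) (hl : 1 < l)
    (k : ℕ) (hk : 1 ≤ k) :
    (τ / (2 * Real.pi) : ℂ) *
        ∫ ω in (-(Real.pi / τ))..(Real.pi / τ),
          Complex.exp (-Complex.I * ω * (k * τ)) / ((Real.cos (ω * τ) : ℂ) - (l : ℂ))
      = -(((l - Real.sqrt (l ^ 2 - 1) : ℝ) : ℂ) ^ k / ((Real.sqrt (l ^ 2 - 1) : ℝ) : ℂ)) := by
  set g : ℝ → ℂ := fun θ => Complex.exp (-I * θ * (k : ℕ)) / ((Real.cos θ : ℂ) - l) with hg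
  have h1 : (fun ω : ℝ =>
        Complex.exp (-Complex.I * ω * (k * τ)) / ((Real.cos (ω * τ) : ℂ) - (l : ℂ)))
      = fun ω : ℝ => g (ω * τ) := by
    funext ω
    rw [hg]
    simp only []
    congr 2
    push_cast
    ring
  rw [h1, intervalIntegral.integral_comp_mul_right g hτ.ne',
    show (-(Real.pi / τ)) * τ = -π by field_simp,
    show (Real.pi / τ) * τ = π by field_simp, hg, Gk l hl k]
  have hs0 : 0 < Real.sqrt (l ^ 2 - 1) := Real.sqrt_pos.2 (by nlinarith)
  have hsne : ((Real.sqrt (l ^ 2 - 1) : ℝ) : ℂ) ≠ 0 := Complex.ofReal_ne_zero.2 hs0.ne'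
  have hτne : (τ : ℂ) ≠ 0 := Complex.ofReal_ne_zero.2 hτ.ne'
  have hπne : ((π : ℝ) : ℂ) ≠ 0 := Complex.ofReal_ne_zero.2 Real.pi_ne_zero
  rw [Complex.real_smul]
  push_cast
  field_simp
end
end
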